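/- Assume the mesh functions (u_h)_{h>0} converge uniformly on compact subsets of Ω to a continuous convex function u : Ω → ℝ. Let K ⊂ Ω be compact and let h_k → 0 be any sequence. Then the set (⋂_{n} ⋃_{k ≥ n} ∂Γ(u_{h_k})(K)) \ ∂u(K) has d-dimensional Lebesgue measure zero, where ∂Γ(u_{h_k})(K) = ⋃_{x ∈ K ∩ conv(N_{h_k})} ∂Γ(u_{h_k})(x) and ∂u(K) = ⋃_{x∈K} ∂u(x). -/

import Mathlib

open Set MeasureTheory Filter Topology

noncomputable section

abbrev Euc (d : ℕ) := EuclideanSpace ℝ (Fin d)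

/-- Subdifferential of `v` at `x` relative to the set `C`. -/
def subdiff {d : ℕ} (C : Set (Euc d)) (v : Euc d → ℝ) (x : Euc d) : Set (Euc d) :=
  {p | ∀ y ∈ C, v x + (inner ℝ p (y - x) : ℝ) ≤ v y}

/-- `⋃ x ∈ S, subdiff C v x`. -/
def subdiffSet {d : ℕ} (C : Set (Euc d)) (v : Euc d → ℝ) (S : Set (Euc d)) : Set (Euc d) :=
  ⋃ x ∈ S, subdiff C v x

/-- The convex extension `ũ` of `u : Ω → ℝ` (may take the value `+∞`, hence `EReal`). -/
def extFun {d : ℕ} (Ω : Set (Euc d)) (u : Euc d → ℝ) (x : Euc d) : EReal :=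
  ⨆ y ∈ Ω, ⨆ q ∈ subdiff Ω u y, ((u y + (inner ℝ q (x - y) : ℝ) : ℝ) : EReal)

/-- `χ_u(x)`: the subdifferential of the extension `ũ` at `x`. -/
def chiSub {d : ℕ} (Ω : Set (Euc d)) (u : Euc d → ℝ) (x : Euc d) : Set (Euc d) :=
  {p | ∀ z : Euc d, extFun Ω u x + (((inner ℝ p (z - x) : ℝ) : ℝ) : EReal) ≤ extFun Ω u z}

def chiSubSet {d : ℕ} (Ω : Set (Euc d)) (u : Euc d → ℝ) (S : Set (Euc d)) : Set (Euc d) :=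
  ⋃ x ∈ S, chiSub Ω u x

/-- The lattice `hℤ^d`. -/
def latt (d : ℕ) (h : ℝ) : Set (Euc d) := {x | ∀ i, ∃ m : ℤ, x i = m * h}

/-- `Ω_h = Ω ∩ hℤ^d`. -/
def meshΩ {d : ℕ} (Ω : Set (Euc d)) (h : ℝ) : Set (Euc d) := Ω ∩ latt d h

/-- An integer direction `e ∈ ℤ^d` as a vector of `ℝ^d`. -/
def intVec {d : ℕ} (e : Fin d → ℤ) : Euc d :=
  (EuclideanSpace.equiv (Fin d) ℝ).symm (fun i => (e i : ℝ))

/-- `h^e_x = sup { r h : r ∈ [0,1], x + r h e ∈ closure Ω }`. -/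
def hev {d : ℕ} (Ω : Set (Euc d)) (h : ℝ) (x : Euc d) (e : Fin d → ℤ) : ℝ :=
  sSup {t | ∃ r ∈ Icc (0:ℝ) 1, t = r * h ∧ x + (r * h) • intVec e ∈ closure Ω}

/-- The boundary nodes `∂Ω_h` for the direction set `V`. -/
def meshBd {d : ℕ} (Ω : Set (Euc d)) (h : ℝ) (V : Set (Fin d → ℤ)) : Set (Euc d) :=
  {x ∈ frontier Ω | ∃ y ∈ meshΩ Ω h, ∃ e ∈ V, x = y + hev Ω h y e • intVec e}

/-- The convex envelope of `u` with constraints on `N`: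
`Γ(u)(x) = sup {L x : L affine, L ≤ u on N}`. -/
def convEnv {d : ℕ} (N : Set (Euc d)) (u : Euc d → ℝ) (x : Euc d) : ℝ :=
  sSup {t | ∃ (p : Euc d) (c : ℝ),
    (∀ y ∈ N, (inner ℝ p y : ℝ) + c ≤ u y) ∧ t = (inner ℝ p x : ℝ) + c}

/-- The second difference operator `Δ_e u_h (x)`. -/
def deltaE {d : ℕ} (Ω : Set (Euc d)) (h : ℝ) (u : Euc d → ℝ) (e : Fin d → ℤ)
    (x : Euc d) : ℝ :=
  2 / (hev Ω h x e + hev Ω h x (-e)) *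
    ((u (x + hev Ω h x e • intVec e) - u x) / hev Ω h x e +
     (u (x + hev Ω h x (-e) • intVec (-e)) - u x) / hev Ω h x (-e))

/-- Discrete convexity with the full set of directions `e ∈ ℤ^d \ {0}`. -/
def DiscConvex {d : ℕ} (Ω : Set (Euc d)) (h : ℝ) (u : Euc d → ℝ) : Prop :=
  ∀ x ∈ meshΩ Ω h, ∀ e : Fin d → ℤ, e ≠ 0 → 0 ≤ deltaE Ω h u e x


lemma aux_coord_le_norm {d : ℕ} (x : Euc d) (i : Fin d) : |x i| ≤ ‖x‖ := by
  rw [EuclideanSpace.norm_eq]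
  have h1 : |x i| = Real.sqrt (‖x i‖ ^ 2) := by
    rw [Real.sqrt_sq_eq_abs, Real.norm_eq_abs, abs_abs]
  rw [h1]
  exact Real.sqrt_le_sqrt (Finset.single_le_sum (f := fun j => ‖x j‖ ^ 2) (fun j _ => sq_nonneg _) (Finset.mem_univ i))

lemma subgrad_unique {d : ℕ} {f : Euc d → ℝ} {p v₁ v₂ : Euc d}
    (hf : DifferentiableAt ℝ f p)
    (h₁ : ∀ q, f p + (inner ℝ v₁ (q - p) : ℝ) ≤ f q)
    (h₂ : ∀ q, f p + (inner ℝ v₂ (q - p) : ℝ) ≤ f q) : v₁ = v₂ := by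
  have key : ∀ v : Euc d, (∀ q, f p + (inner ℝ v (q - p) : ℝ) ≤ f q) →
      innerSL ℝ v = fderiv ℝ f p := by
    intro v hv
    have hdF : DifferentiableAt ℝ (fun q => f q - innerSL ℝ v q) p :=
      hf.sub ((innerSL ℝ v).differentiableAt)
    have hmin : IsLocalMin (fun q => f q - innerSL ℝ v q) p := by
      apply Filter.Eventually.of_forall
      intro q
      have := hv q
      simp only [innerSL_apply_apply] at *
      have hexp : (inner ℝ v (q - p) : ℝ) = (inner ℝ v q : ℝ) - (inner ℝ v p : ℝ) := inner_sub_right _ _ _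
      linarith [hv q, hexp ▸ hv q]
    have h0 := hmin.fderiv_eq_zero
    have : fderiv ℝ (fun q => f q - innerSL ℝ v q) p = fderiv ℝ f p - innerSL ℝ v := by
      rw [fderiv_fun_sub hf ((innerSL ℝ v).differentiableAt), (innerSL ℝ v).fderiv]
    rw [this] at h0
    exact (sub_eq_zero.mp h0).symm
  have h := (key v₁ h₁).trans (key v₂ h₂).symm
  apply ext_inner_right ℝ
  intro w
  have := DFunLike.congr_fun h w
  simpa using this

lemma mesh_finite {d : ℕ} {Ω : Set (Euc d)} (hbd : Bornology.IsBounded Ω) {h : ℝ}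
    (hh : 0 < h) : (meshΩ Ω h).Finite := by
  classical
  obtain ⟨R, hR⟩ := hbd.subset_closedBall 0
  set T : Set (Fin d → ℤ) := {v | ∀ i, |(v i : ℝ)| ≤ R / h} with hT
  have hTfin : T.Finite := by
    have hsub : T ⊆ Set.pi univ (fun _ : Fin d => {m : ℤ | m ∈ Icc (-⌈R / h⌉) ⌈R / h⌉}) := by
      intro v hv i _
      have h1 : |(v i : ℝ)| ≤ (⌈R / h⌉ : ℝ) := (hv i).trans (Int.le_ceil _)
      have h2 : |v i| ≤ ⌈R / h⌉ := by
        rw [← Int.cast_abs] at h1; exact_mod_cast h1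
      exact ⟨neg_le_of_abs_le h2, le_of_abs_le h2⟩
    exact (Set.Finite.pi (fun _ => Set.finite_Icc _ _)).subset hsub
  have hsub : meshΩ Ω h ⊆
      (fun v : Fin d → ℤ => (EuclideanSpace.equiv (Fin d) ℝ).symm (fun i => (v i : ℝ) * h)) '' T := by
    rintro x ⟨hxΩ, hlat⟩
    choose m hm using hlat
    have hxR : ‖x‖ ≤ R := by
      have := hR hxΩ
      simpa [Metric.mem_closedBall, dist_eq_norm] using this
    refine ⟨m, fun i => ?_, ?_⟩
    · have h1 : |(m i : ℝ)| * h = |x i| := by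
        rw [hm i, abs_mul, abs_of_pos hh]
      have h2 : |x i| ≤ R := (aux_coord_le_norm x i).trans hxR
      rw [le_div_iff₀ hh]
      rw [h1]; exact h2
    · apply PiLp.ext
      intro i
      simpa using (hm i).symm
  exact (hTfin.image _).subset hsub

lemma latt_approx {d : ℕ} {h : ℝ} (hh : 0 < h) (z : Euc d) :
    ∃ y ∈ latt d h, ‖y - z‖ ≤ Real.sqrt d * h := by
  set y : Euc d := (EuclideanSpace.equiv (Fin d) ℝ).symm (fun i => (round (z i / h) : ℝ) * h)
    with hy
  have hyi : ∀ i, y i = (round (z i / h) : ℝ) * h := fun i => rfl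
  refine ⟨y, fun i => ⟨round (z i / h), hyi i⟩, ?_⟩
  have hcoord : ∀ i, ‖(y - z) i‖ ^ 2 ≤ (h / 2) ^ 2 := by
    intro i
    have h1 : (y - z) i = (round (z i / h) : ℝ) * h - z i := by
      simp [hyi i]
    have h2 : |(round (z i / h) : ℝ) * h - z i| ≤ h / 2 := by
      have h3 : (round (z i / h) : ℝ) * h - z i = -((z i / h - round (z i / h)) * h) := by
        field_simp; ring
      rw [h3, abs_neg, abs_mul, abs_of_pos hh]
      have := abs_sub_round (z i / h)
      nlinarith [abs_nonneg (z i / h - round (z i / h))]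
    rw [h1, Real.norm_eq_abs]
    exact pow_le_pow_left₀ (abs_nonneg _) h2 2
  have hnorm : ‖y - z‖ ≤ Real.sqrt (d * (h / 2) ^ 2) := by
    rw [EuclideanSpace.norm_eq]
    apply Real.sqrt_le_sqrt
    calc ∑ i, ‖(y - z) i‖ ^ 2 ≤ ∑ _i : Fin d, (h / 2) ^ 2 :=
          Finset.sum_le_sum (fun i _ => hcoord i)
      _ = d * (h / 2) ^ 2 := by simp [Finset.sum_const, nsmul_eq_mul]
  refine hnorm.trans ?_
  rw [Real.sqrt_mul (by positivity), Real.sqrt_sq (by positivity)]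
  have : Real.sqrt d * (h / 2) ≤ Real.sqrt d * h := by
    apply mul_le_mul_of_nonneg_left (by linarith) (Real.sqrt_nonneg _)
  linarith

/-- The discrete Legendre transform. -/
def legW {d : ℕ} (N : Set (Euc d)) (g : Euc d → ℝ) (q : Euc d) : ℝ :=
  sSup ((fun y => (inner ℝ q y : ℝ) - g y) '' N)

lemma legW_lipschitz {d : ℕ} {N : Set (Euc d)} (hfin : N.Finite) (g : Euc d → ℝ) :
    ∃ C : NNReal, LipschitzWith C (legW N g) := by
  rcases N.eq_empty_or_nonempty with rfl | hne
  · refine ⟨0, ?_⟩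
    have hconst : legW (∅ : Set (Euc d)) g = fun _ => (0 : ℝ) := by
      funext q; simp [legW, Real.sSup_empty]
    rw [hconst]
    exact LipschitzWith.const 0
  · obtain ⟨y₀, hy₀⟩ := hne
    set M : ℝ := sSup ((fun y => ‖y‖) '' N) with hM
    have hMy : ∀ y ∈ N, ‖y‖ ≤ M := fun y hy =>
      le_csSup ((hfin.image _).bddAbove) (mem_image_of_mem _ hy)
    have hM0 : 0 ≤ M := le_trans (norm_nonneg y₀) (hMy y₀ hy₀)
    refine ⟨⟨M, hM0⟩, LipschitzWith.of_dist_le_mul fun q q' => ?_⟩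
    have himg : ∀ q : Euc d, ((fun y => (inner ℝ q y : ℝ) - g y) '' N).Nonempty :=
      fun q => Set.Nonempty.image _ ⟨y₀, hy₀⟩
    have hbdd : ∀ q : Euc d, BddAbove ((fun y => (inner ℝ q y : ℝ) - g y) '' N) :=
      fun q => (hfin.image _).bddAbove
    have hstep : ∀ a b : Euc d, legW N g a ≤ legW N g b + M * dist a b := by
      intro a b
      apply csSup_le (himg a)
      rintro t ⟨y, hy, rfl⟩
      show (inner ℝ a y : ℝ) - g y ≤ legW N g b + M * dist a b
      have h1 : (inner ℝ b y : ℝ) - g y ≤ legW N g b :=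
        le_csSup (hbdd b) (mem_image_of_mem _ hy)
      have h2 : (inner ℝ a y : ℝ) - (inner ℝ b y : ℝ) = (inner ℝ (a - b) y : ℝ) :=
        (inner_sub_left _ _ _).symm
      have h3 : (inner ℝ (a - b) y : ℝ) ≤ ‖a - b‖ * ‖y‖ := real_inner_le_norm _ _
      have h4 : ‖a - b‖ * ‖y‖ ≤ ‖a - b‖ * M :=
        mul_le_mul_of_nonneg_left (hMy y hy) (norm_nonneg _)
      rw [dist_eq_norm]
      nlinarith
    rw [Real.dist_eq, abs_sub_le_iff]
    have hd : dist q' q = dist q q' := dist_comm _ _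
    have hs1 := hstep q q'
    have hs2 := hstep q' q
    rw [hd] at hs2
    constructor
    · show legW N g q - legW N g q' ≤ M * dist q q'; linarith
    · show legW N g q' - legW N g q ≤ M * dist q q'; linarith

lemma legW_key {d : ℕ} {N : Set (Euc d)} (hfin : N.Finite) (g : Euc d → ℝ) {x p : Euc d}
    (hx : x ∈ convexHull ℝ N)
    (hp : p ∈ subdiff (convexHull ℝ N) (convEnv N g) x)
    (hdiff : DifferentiableAt ℝ (legW N g) p) :
    x ∈ N ∧ convEnv N g x = g x := by
  have hne : N.Nonempty := by
    rcases N.eq_empty_or_nonempty with rfl | hne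
    · simp [convexHull_empty] at hx
    · exact hne
  obtain ⟨y₀, hy₀⟩ := hne
  have himg : ∀ q : Euc d, ((fun y => (inner ℝ q y : ℝ) - g y) '' N).Nonempty :=
    fun q => Set.Nonempty.image _ ⟨y₀, hy₀⟩
  have hbdd : ∀ q : Euc d, BddAbove ((fun y => (inner ℝ q y : ℝ) - g y) '' N) :=
    fun q => (hfin.image _).bddAbove
  have hWle : ∀ (q : Euc d), ∀ y ∈ N, (inner ℝ q y : ℝ) - g y ≤ legW N g q :=
    fun q y hy => le_csSup (hbdd q) (mem_image_of_mem _ hy)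
  -- the sSup-defining set of convEnv at a point x' of the hull
  set S : Euc d → Set ℝ := fun x' => {t | ∃ (p' : Euc d) (c : ℝ),
    (∀ y ∈ N, (inner ℝ p' y : ℝ) + c ≤ g y) ∧ t = (inner ℝ p' x' : ℝ) + c} with hS
  set M : ℝ := sSup (g '' N) with hM
  have hMy : ∀ y ∈ N, g y ≤ M := fun y hy =>
    le_csSup ((hfin.image _).bddAbove) (mem_image_of_mem _ hy)
  have hSbdd : ∀ x' ∈ convexHull ℝ N, BddAbove (S x') := by
    intro x' hx'
    refine ⟨M, ?_⟩
    rintro t ⟨p', c, hpc, rfl⟩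
    have hlin : IsLinearMap ℝ (fun z : Euc d => (inner ℝ p' z : ℝ)) :=
      ⟨fun a b => inner_add_right _ _ _, fun c' a => real_inner_smul_right _ _ _⟩
    have hhalf : Convex ℝ {z : Euc d | (inner ℝ p' z : ℝ) ≤ M - c} :=
      convex_halfSpace_le hlin (M - c)
    have hNsub : N ⊆ {z : Euc d | (inner ℝ p' z : ℝ) ≤ M - c} := by
      intro y hy
      have h1 := hpc y hy
      have h2 := hMy y hy
      simp only [mem_setOf_eq]
      linarith
    have hx'H := convexHull_min hNsub hhalf hx'
    simp only [mem_setOf_eq] at hx'H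
    linarith
  have hSne : ∀ x' : Euc d, (S x').Nonempty := by
    intro x'
    refine ⟨(inner ℝ (0 : Euc d) x' : ℝ) + sInf (g '' N), 0, sInf (g '' N), ?_, rfl⟩
    intro y hy
    have : sInf (g '' N) ≤ g y :=
      csInf_le ((hfin.image _).bddBelow) (mem_image_of_mem _ hy)
    simpa using this
  -- lower bound for the envelope from any slope q
  have henv_ge : ∀ (q : Euc d), ∀ x' ∈ convexHull ℝ N,
      (inner ℝ q x' : ℝ) - legW N g q ≤ convEnv N g x' := by
    intro q x' hx'
    have hmem : (inner ℝ q x' : ℝ) - legW N g q ∈ S x' := by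
      refine ⟨q, -(legW N g q), ?_, by ring⟩
      intro y hy
      have := hWle q y hy
      linarith
    exact le_csSup (hSbdd x' hx') hmem
  -- envelope is below g on nodes
  have henv_le : ∀ y ∈ N, convEnv N g y ≤ g y := by
    intro y hy
    apply csSup_le (hSne y)
    rintro t ⟨p', c, hpc, rfl⟩
    exact hpc y hy
  -- the basic identity
  have hWx : legW N g p = (inner ℝ p x : ℝ) - convEnv N g x := by
    apply le_antisymm
    · apply csSup_le (himg p)
      rintro t ⟨y, hy, rfl⟩
      show (inner ℝ p y : ℝ) - g y ≤ (inner ℝ p x : ℝ) - convEnv N g x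
      have h1 := hp y (subset_convexHull ℝ N hy)
      have h2 := henv_le y hy
      have h3 : (inner ℝ p (y - x) : ℝ) = (inner ℝ p y : ℝ) - (inner ℝ p x : ℝ) :=
        inner_sub_right _ _ _
      linarith
    · have := henv_ge p x hx
      linarith
  -- a maximizer of the Legendre transform
  obtain ⟨y', hy'N, hy'⟩ : ∃ y' ∈ N, (inner ℝ p y' : ℝ) - g y' = legW N g p := by
    have hmem := Set.Nonempty.csSup_mem (himg p) (hfin.image _)
    obtain ⟨y', hy', he⟩ := hmem
    exact ⟨y', hy', he⟩
  -- both x and y' are subgradients of legW at p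
  have hsub_x : ∀ q, legW N g p + (inner ℝ x (q - p) : ℝ) ≤ legW N g q := by
    intro q
    have h1 := henv_ge q x hx
    have h2 : (inner ℝ x (q - p) : ℝ) = (inner ℝ q x : ℝ) - (inner ℝ p x : ℝ) := by
      simp only [inner_sub_right]
      rw [real_inner_comm x q, real_inner_comm x p]
    rw [hWx]
    linarith
  have hsub_y' : ∀ q, legW N g p + (inner ℝ y' (q - p) : ℝ) ≤ legW N g q := by
    intro q
    have h1 := hWle q y' hy'N
    have h2 : (inner ℝ y' (q - p) : ℝ) = (inner ℝ q y' : ℝ) - (inner ℝ p y' : ℝ) := by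
      simp only [inner_sub_right]
      rw [real_inner_comm y' q, real_inner_comm y' p]
    linarith [hy']
  have hxy : x = y' := subgrad_unique hdiff hsub_x hsub_y'
  refine ⟨hxy ▸ hy'N, ?_⟩
  have hgx : (inner ℝ p x : ℝ) - g x = legW N g p := by rw [hxy]; exact hy'
  rw [hWx] at hgx
  linarith

lemma convEnv_le {d : ℕ} {N : Set (Euc d)} (hfin : N.Finite) (g : Euc d → ℝ) {y : Euc d}
    (hy : y ∈ N) : convEnv N g y ≤ g y := by
  apply csSup_le
  · refine ⟨(inner ℝ (0 : Euc d) y : ℝ) + sInf (g '' N), 0, sInf (g '' N), ?_, rfl⟩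
    intro y' hy'
    have : sInf (g '' N) ≤ g y' :=
      csInf_le ((hfin.image _).bddBelow) (mem_image_of_mem _ hy')
    simpa using this
  · rintro t ⟨p', c, hpc, rfl⟩
    exact hpc y hy


/-- if `u_h → u` uniformly on compact subsets of `Ω` with `u` continuous and
convex, then for each compact `K ⊆ Ω` and each sequence `h_k → 0`, the set
`(⋂ n, ⋃ k ≥ n, ∂Γ(u_{h_k})(K)) \ ∂u(K)` is Lebesgue-null. -/
theorem statement11 {d : ℕ} (hd : 1 ≤ d) (Ω : Set (Euc d))
    (hne : Ω.Nonempty) (hbd : Bornology.IsBounded Ω) (hop : IsOpen Ω) (hcv : Convex ℝ Ω)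
    (B : ℝ → Set (Euc d)) (hB : ∀ h : ℝ, 0 < h → (B h).Finite ∧ B h ⊆ frontier Ω)
    (u : Euc d → ℝ) (huc : ContinuousOn u Ω) (hucv : ConvexOn ℝ Ω u)
    (uh : ℝ → Euc d → ℝ)
    (hcvg : ∀ K : Set (Euc d), IsCompact K → K ⊆ Ω → ∀ ε : ℝ, 0 < ε →
      ∃ h₀ : ℝ, 0 < h₀ ∧ ∀ h : ℝ, 0 < h → h < h₀ →
        ∀ x ∈ (meshΩ Ω h ∪ B h) ∩ K, |uh h x - u x| < ε)
    (K : Set (Euc d)) (hK : IsCompact K) (hKΩ : K ⊆ Ω)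
    (hk : ℕ → ℝ) (hkpos : ∀ k, 0 < hk k) (hk0 : Tendsto hk atTop (𝓝 0)) :
    volume ((⋂ n : ℕ, ⋃ k ∈ Ici n, ⋃ x ∈ K ∩ convexHull ℝ (meshΩ Ω (hk k) ∪ B (hk k)),
        subdiff (convexHull ℝ (meshΩ Ω (hk k) ∪ B (hk k)))
          (convEnv (meshΩ Ω (hk k) ∪ B (hk k)) (uh (hk k))) x) \
      (⋃ x ∈ K, subdiff Ω u x)) = 0 := by
  classical
  set NN : ℕ → Set (Euc d) := fun k => meshΩ Ω (hk k) ∪ B (hk k) with hNN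
  have hNfin : ∀ k, (NN k).Finite := fun k =>
    (mesh_finite hbd (hkpos k)).union (hB _ (hkpos k)).1
  set Nul : Set (Euc d) := ⋃ k, {q | ¬ DifferentiableAt ℝ (legW (NN k) (uh (hk k))) q}
    with hNul
  have hNulnull : volume Nul = 0 := by
    apply measure_iUnion_null
    intro k
    obtain ⟨C, hC⟩ := legW_lipschitz (hNfin k) (uh (hk k))
    have h := hC.ae_differentiableAt (μ := volume)
    rwa [ae_iff] at h
  apply measure_mono_null ?_ hNulnull
  intro p hp
  obtain ⟨hpA, hpB⟩ := hp
  rw [mem_iInter] at hpA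
  by_contra hpN
  have hdiff : ∀ k, DifferentiableAt ℝ (legW (NN k) (uh (hk k))) p := by
    intro k
    by_contra hcon
    exact hpN (mem_iUnion.mpr ⟨k, hcon⟩)
  have hsel : ∀ n : ℕ, ∃ k, n ≤ k ∧ ∃ x, (x ∈ K ∧ x ∈ convexHull ℝ (NN k)) ∧
      p ∈ subdiff (convexHull ℝ (NN k)) (convEnv (NN k) (uh (hk k))) x := by
    intro n
    have h := hpA n
    simp only [mem_iUnion, mem_Ici, exists_prop, mem_inter_iff] at h
    obtain ⟨k, hkn, x, ⟨hxK, hxC⟩, hpmem⟩ := h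
    exact ⟨k, hkn, x, ⟨hxK, hxC⟩, hpmem⟩
  choose m hmn xs hxs hsub using hsel
  have hxsK : ∀ n, xs n ∈ K := fun n => (hxs n).1
  have hkey : ∀ n, xs n ∈ NN (m n) ∧
      convEnv (NN (m n)) (uh (hk (m n))) (xs n) = uh (hk (m n)) (xs n) :=
    fun n => legW_key (hNfin (m n)) _ (hxs n).2 (hsub n) (hdiff (m n))
  obtain ⟨x₀, hx₀K, ψ, hψ, hx₀⟩ := hK.tendsto_subseq hxsK
  apply hpB
  apply mem_iUnion₂.mpr
  refine ⟨x₀, hx₀K, ?_⟩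
  -- goal : p ∈ subdiff Ω u x₀
  intro z hz
  obtain ⟨r, hr, hball⟩ : ∃ r > 0, Metric.closedBall z r ⊆ Ω := by
    obtain ⟨r, hr, hball⟩ := Metric.isOpen_iff.mp hop z hz
    refine ⟨r / 2, by linarith, fun w hw => hball ?_⟩
    have := Metric.mem_closedBall.mp hw
    exact Metric.mem_ball.mpr (lt_of_le_of_lt this (by linarith))
  set K' : Set (Euc d) := K ∪ Metric.closedBall z r with hK'
  have hK'cpt : IsCompact K' := hK.union (isCompact_closedBall z r)
  have hK'Ω : K' ⊆ Ω := union_subset hKΩ hball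
  set mψ : ℕ → ℕ := fun n => m (ψ n) with hmψdef
  have hmono : ∀ n, n ≤ mψ n := fun n => le_trans hψ.le_apply (hmn (ψ n))
  have hmψ : Tendsto (fun n => hk (mψ n)) atTop (𝓝 0) :=
    hk0.comp (tendsto_atTop_mono hmono tendsto_id)
  choose ys hylat hydist using fun n => latt_approx (hkpos (mψ n)) z
  have hyz : Tendsto ys atTop (𝓝 z) := by
    rw [tendsto_iff_norm_sub_tendsto_zero]
    apply tendsto_of_tendsto_of_tendsto_of_le_of_le (g := fun _ => (0:ℝ))
      (h := fun n => Real.sqrt d * hk (mψ n))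
    · exact tendsto_const_nhds
    · simpa using hmψ.const_mul (Real.sqrt d)
    · exact fun n => norm_nonneg _
    · exact fun n => hydist n
  have hucx : ContinuousAt u x₀ := huc.continuousAt (hop.mem_nhds (hKΩ hx₀K))
  have hucz : ContinuousAt u z := huc.continuousAt (hop.mem_nhds hz)
  have hmain : ∀ ε : ℝ, 0 < ε → u x₀ + (inner ℝ p (z - x₀) : ℝ) ≤ u z + 2 * ε := by
    intro ε hε
    obtain ⟨h₀, hh₀, hctrl⟩ := hcvg K' hK'cpt hK'Ω ε hε
    have hev1 : ∀ᶠ n in atTop, hk (mψ n) < h₀ := hmψ.eventually_lt_const hh₀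
    have hev2 : ∀ᶠ n in atTop, Real.sqrt d * hk (mψ n) ≤ r := by
      have ht : Tendsto (fun n => Real.sqrt d * hk (mψ n)) atTop (𝓝 0) := by
        simpa using hmψ.const_mul (Real.sqrt d)
      exact ht.eventually_le_const hr
    have hineq : ∀ᶠ n in atTop,
        u (xs (ψ n)) + (inner ℝ p (ys n - xs (ψ n)) : ℝ) ≤ u (ys n) + 2 * ε := by
      filter_upwards [hev1, hev2] with n h1 h2
      set k := mψ n with hkdef
      set x := xs (ψ n) with hxdef
      have hxNN : x ∈ NN k := (hkey (ψ n)).1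
      have henvx : convEnv (NN k) (uh (hk k)) x = uh (hk k) x := (hkey (ψ n)).2
      have hyΩ : ys n ∈ Ω := hball (Metric.mem_closedBall.mpr
        (by rw [dist_eq_norm]; exact (hydist n).trans h2))
      have hyNN : ys n ∈ NN k := Or.inl ⟨hyΩ, hylat n⟩
      have hyK' : ys n ∈ K' := Or.inr (Metric.mem_closedBall.mpr
        (by rw [dist_eq_norm]; exact (hydist n).trans h2))
      have hxK' : x ∈ K' := Or.inl (hxsK (ψ n))
      have e1 : |uh (hk k) x - u x| < ε := hctrl (hk k) (hkpos k) h1 x ⟨hxNN, hxK'⟩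
      have e2 : |uh (hk k) (ys n) - u (ys n)| < ε :=
        hctrl (hk k) (hkpos k) h1 (ys n) ⟨hyNN, hyK'⟩
      rw [abs_lt] at e1 e2
      have hsubd := hsub (ψ n) (ys n) (subset_convexHull ℝ (NN k) hyNN)
      have henvy : convEnv (NN k) (uh (hk k)) (ys n) ≤ uh (hk k) (ys n) :=
        convEnv_le (hNfin k) _ hyNN
      rw [henvx] at hsubd
      linarith [e1.1, e1.2, e2.1, e2.2]
    have hlhs : Tendsto (fun n => u (xs (ψ n)) + (inner ℝ p (ys n - xs (ψ n)) : ℝ)) atTop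
        (𝓝 (u x₀ + (inner ℝ p (z - x₀) : ℝ))) := by
      apply Tendsto.add
      · exact hucx.tendsto.comp hx₀
      · exact Filter.Tendsto.inner tendsto_const_nhds (hyz.sub hx₀)
    have hrhs : Tendsto (fun n => u (ys n) + 2 * ε) atTop (𝓝 (u z + 2 * ε)) :=
      (hucz.tendsto.comp hyz).add tendsto_const_nhds
    exact le_of_tendsto_of_tendsto hlhs hrhs hineq
  have : ∀ ε : ℝ, 0 < ε → u x₀ + (inner ℝ p (z - x₀) : ℝ) ≤ u z + ε := by
    intro ε hε
    have := hmain (ε / 2) (by linarith)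
    linarith
  exact le_of_forall_pos_le_add this
end
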